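/- For all nonnegative integers d₁, …, d_n and a formal variable ξ, the following identity of rational functions in q and ξ holds: (ξ;q²)_{d₁+⋯+d_n} / ∏_{i=1}^n (q²;q²)_{d_i} = ∑ (over all decompositions α_i + β_i = d_i for i = 1,…,n) of (−q)^{β₁²+⋯+β_n² + 2·∑_{i=1}^{n−1} β_{i+1}(d₁+⋯+d_i)} · (ξ q^{−1})^{β₁+⋯+β_n} / ∏_{i=1}^n ((q²;q²)_{α_i} (q²;q²)_{β_i}). -/

import Mathlib

namespace Stmt1Aux

open Finset

variable {K : Type*} [Field K]

def E (q : K) (k : ℕ) : K := ∏ s ∈ Finset.range k, (1 - q ^ (2 * (s + 1)))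

lemma E_zero (q : K) : E q 0 = 1 := Finset.prod_range_zero _

lemma E_succ (q : K) (k : ℕ) : E q (k + 1) = E q k * (1 - q ^ (2 * (k + 1))) :=
  Finset.prod_range_succ _ _

lemma E_ne_zero {q : K} (hpoch : ∀ s : ℕ, 1 ≤ s → (1 : K) - q ^ (2 * s) ≠ 0) (k : ℕ) :
    E q k ≠ 0 :=
  Finset.prod_ne_zero_iff.2 fun s _ => hpoch (s + 1) (Nat.le_add_left 1 s)

def Ch (q : K) (d b : ℕ) : K := E q d / (E q (d - b) * E q b)

lemma Ch_zero {q : K} (hpoch : ∀ s : ℕ, 1 ≤ s → (1 : K) - q ^ (2 * s) ≠ 0) (d : ℕ) :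
    Ch q d 0 = 1 := by
  simp [Ch, E_zero, div_self (E_ne_zero hpoch d)]

lemma Ch_self {q : K} (hpoch : ∀ s : ℕ, 1 ≤ s → (1 : K) - q ^ (2 * s) ≠ 0) (d : ℕ) :
    Ch q d d = 1 := by
  simp [Ch, E_zero, div_self (E_ne_zero hpoch d)]

lemma Ch_pascal {q : K} (hpoch : ∀ s : ℕ, 1 ≤ s → (1 : K) - q ^ (2 * s) ≠ 0)
    {d b : ℕ} (hb : b < d) :
    Ch q (d + 1) (b + 1) = Ch q d (b + 1) + q ^ (2 * (d - b)) * Ch q d b := by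
  obtain ⟨a, rfl⟩ : ∃ a, d = b + 1 + a := ⟨d - (b + 1), by omega⟩
  have h1 : b + 1 + a + 1 - (b + 1) = a + 1 := by omega
  have h2 : b + 1 + a - (b + 1) = a := by omega
  have h3 : b + 1 + a - b = a + 1 := by omega
  have hEa := E_ne_zero hpoch a
  have hEb := E_ne_zero hpoch b
  have hY := hpoch (a + 1) (by omega)
  have hZ := hpoch (b + 1) (by omega)
  rw [Ch, Ch, Ch, h1, h2, h3, show b + 1 + a + 1 = (b + 1 + a) + 1 from rfl,
    E_succ q (b + 1 + a), E_succ q a, E_succ q b]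
  field_simp
  ring_nf

end Stmt1Aux

namespace Stmt1Aux

variable {K : Type*} [Field K]
open Finset

def T (q ξ : K) (b : ℕ) : K := (-q) ^ (b ^ 2) * (ξ / q) ^ b

lemma T_succ {q : K} (hq : q ≠ 0) (ξ : K) (b : ℕ) :
    T q ξ (b + 1) = -(ξ * q ^ (2 * b)) * T q ξ b := by
  rw [T, T, show (b + 1) ^ 2 = b ^ 2 + 2 * b + 1 from by ring, pow_add, pow_add, pow_succ,
    show ((-q) : K) ^ (2 * b) = q ^ (2 * b) from by rw [pow_mul, pow_mul, neg_sq]]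
  field_simp
  linear_combination (-(q ^ b ^ 2 * ξ * ξ ^ b * q⁻¹ ^ b * (-1) ^ b ^ 2)) * mul_inv_cancel₀ hq

lemma qbinom {q : K} (hq : q ≠ 0) (hpoch : ∀ s : ℕ, 1 ≤ s → (1 : K) - q ^ (2 * s) ≠ 0)
    (ξ : K) (d : ℕ) :
    ∏ s ∈ Finset.range d, (1 - ξ * q ^ (2 * s)) =
      ∑ b ∈ Finset.range (d + 1), T q ξ b * Ch q d b := by
  induction d with
  | zero => simp [T, Ch_zero hpoch]
  | succ d ih =>
    have hCh : ∀ b ∈ Finset.range d,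
        T q ξ (b + 1) * Ch q (d + 1) (b + 1) =
          T q ξ (b + 1) * Ch q d (b + 1) - ξ * q ^ (2 * d) * (T q ξ b * Ch q d b) := by
      intro b hb
      have hbd := Finset.mem_range.1 hb
      rw [Ch_pascal hpoch hbd, mul_add, T_succ hq ξ b,
        show 2 * d = 2 * b + 2 * (d - b) from by omega, pow_add]
      ring
    rw [Finset.prod_range_succ, ih,
      Finset.sum_range_succ' (fun b => T q ξ b * Ch q (d + 1) b) (d + 1),
      Finset.sum_range_succ (fun b => T q ξ (b + 1) * Ch q (d + 1) (b + 1)) d,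
      Ch_self hpoch, Ch_zero hpoch, Finset.sum_congr rfl hCh, Finset.sum_sub_distrib]
    have hS1 : (∑ b ∈ Finset.range (d + 1), T q ξ b * Ch q d b) =
        (∑ b ∈ Finset.range d, T q ξ (b + 1) * Ch q d (b + 1)) + T q ξ 0 * Ch q d 0 :=
      Finset.sum_range_succ' _ d
    have hS2 : (∑ b ∈ Finset.range (d + 1), ξ * q ^ (2 * d) * (T q ξ b * Ch q d b)) =
        (∑ b ∈ Finset.range d, ξ * q ^ (2 * d) * (T q ξ b * Ch q d b)) +
          ξ * q ^ (2 * d) * (T q ξ d * Ch q d d) :=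
      Finset.sum_range_succ _ d
    have hS3 : (∑ b ∈ Finset.range (d + 1), T q ξ b * Ch q d b) * (ξ * q ^ (2 * d)) =
        ∑ b ∈ Finset.range (d + 1), ξ * q ^ (2 * d) * (T q ξ b * Ch q d b) := by
      rw [Finset.sum_mul]; exact Finset.sum_congr rfl fun b _ => by ring
    have hT := T_succ hq ξ d
    have hCd0 := Ch_zero hpoch d
    have hCdd := Ch_self hpoch d
    linear_combination hS1 - hS3 - hS2 - hT + (T q ξ 0) * hCd0 -
      (ξ * q ^ (2 * d)) * (T q ξ d) * hCdd

end Stmt1Aux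

namespace Stmt1Aux

variable {K : Type*} [Field K]
open Finset

lemma node {q : K} (hq : q ≠ 0) (hpoch : ∀ s : ℕ, 1 ≤ s → (1 : K) - q ^ (2 * s) ≠ 0)
    (ξ : K) (S d : ℕ) :
    (∏ s ∈ Finset.range d, (1 - ξ * q ^ (2 * S) * q ^ (2 * s))) / E q d =
      ∑ b ∈ Finset.range (d + 1),
        (-q) ^ (b ^ 2 + 2 * (b * S)) * (ξ / q) ^ b / (E q (d - b) * E q b) := by
  rw [qbinom hq hpoch (ξ * q ^ (2 * S)) d, Finset.sum_div]
  refine Finset.sum_congr rfl fun b _ => ?_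
  rw [T, Ch, pow_add,
    show ((-q) : K) ^ (2 * (b * S)) = q ^ (2 * (b * S)) from by rw [pow_mul, neg_sq, ← pow_mul],
    show (ξ * q ^ (2 * S) / q) ^ b = (ξ / q) ^ b * q ^ (2 * (b * S)) from by
      rw [show ξ * q ^ (2 * S) / q = ξ / q * q ^ (2 * S) from by ring, mul_pow, ← pow_mul,
        show 2 * S * b = 2 * (b * S) from by ring]]
  have hEd := E_ne_zero hpoch d
  have hEa := E_ne_zero hpoch (d - b)
  have hEb := E_ne_zero hpoch b
  field_simp

lemma filt_castSucc (n : ℕ) (d : Fin (n + 1) → ℕ) (i : Fin n) :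
    ∑ j ∈ Finset.univ.filter (fun j => j < Fin.castSucc i), d j =
      ∑ j ∈ Finset.univ.filter (fun j => j < i), d (Fin.castSucc j) := by
  rw [Finset.sum_filter, Finset.sum_filter, Fin.sum_univ_castSucc]
  simp [Fin.castSucc_lt_castSucc_iff, (Fin.castSucc_lt_last i).asymm]

lemma filt_last (n : ℕ) (d : Fin (n + 1) → ℕ) :
    ∑ j ∈ Finset.univ.filter (fun j => j < Fin.last n), d j =
      ∑ j : Fin n, d (Fin.castSucc j) := by
  rw [Finset.sum_filter, Fin.sum_univ_castSucc]
  simp [Fin.castSucc_lt_last]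

lemma prod_split (q ξ : K) : ∀ (n : ℕ) (d : Fin n → ℕ),
    ∏ s ∈ Finset.range (∑ i, d i), (1 - ξ * q ^ (2 * s)) =
      ∏ i, ∏ s ∈ Finset.range (d i),
        (1 - ξ * q ^ (2 * (∑ j ∈ Finset.univ.filter (fun j => j < i), d j)) * q ^ (2 * s)) := by
  intro n
  induction n with
  | zero => intro d; simp
  | succ n ih =>
    intro d
    rw [Fin.sum_univ_castSucc, Finset.prod_range_add, ih (fun i => d i.castSucc),
      Fin.prod_univ_castSucc]
    congr 1
    · refine Finset.prod_congr rfl fun i _ => Finset.prod_congr rfl fun s _ => ?_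
      rw [filt_castSucc n d i]
    · rw [filt_last n d]
      refine Finset.prod_congr rfl fun s _ => ?_
      rw [show 2 * ((∑ i : Fin n, d i.castSucc) + s)
            = 2 * (∑ j : Fin n, d j.castSucc) + 2 * s from by ring, pow_add]
      ring

end Stmt1Aux


/-- The n-node splitting identity:
`(ξ;q²)_{d₁+⋯+d_n} / ∏ (q²;q²)_{d_i}` equals the sum over all decompositions
`α_i + β_i = d_i` of
`(-q)^{∑ β_i² + 2 ∑_{i} β_i (d₁+⋯+d_{i-1})} (ξ q⁻¹)^{∑ β_i} / ∏ ((q²;q²)_{α_i}(q²;q²)_{β_i})`. -/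
theorem stmt_1 {K : Type*} [Field K] (q ξ : K) (hq : q ≠ 0)
    (hpoch : ∀ s : ℕ, 1 ≤ s → (1 : K) - q ^ (2 * s) ≠ 0)
    (n : ℕ) (d : Fin n → ℕ) :
    (∏ s ∈ Finset.range (∑ i, d i), (1 - ξ * q ^ (2 * s))) /
        ∏ i, ∏ s ∈ Finset.range (d i), (1 - q ^ (2 * (s + 1))) =
      ∑ β ∈ Fintype.piFinset (fun i => Finset.range (d i + 1)),
        (-q) ^ ((∑ i, (β i) ^ 2) +
            2 * ∑ i, β i * ∑ j ∈ Finset.univ.filter (fun j => j < i), d j) *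
          (ξ / q) ^ (∑ i, β i) /
          ∏ i, ((∏ s ∈ Finset.range (d i - β i), (1 - q ^ (2 * (s + 1)))) *
            ∏ s ∈ Finset.range (β i), (1 - q ^ (2 * (s + 1)))) := by
  classical
  show (∏ s ∈ Finset.range (∑ i, d i), (1 - ξ * q ^ (2 * s))) / ∏ i, Stmt1Aux.E q (d i) =
      ∑ β ∈ Fintype.piFinset (fun i => Finset.range (d i + 1)),
        (-q) ^ ((∑ i, (β i) ^ 2) +
            2 * ∑ i, β i * ∑ j ∈ Finset.univ.filter (fun j => j < i), d j) *
          (ξ / q) ^ (∑ i, β i) /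
          ∏ i, (Stmt1Aux.E q (d i - β i) * Stmt1Aux.E q (β i))
  rw [Stmt1Aux.prod_split q ξ n d, ← Finset.prod_div_distrib]
  rw [Finset.prod_congr rfl fun i (_ : i ∈ Finset.univ) =>
    Stmt1Aux.node hq hpoch ξ (∑ j ∈ Finset.univ.filter (fun j => j < i), d j) (d i)]
  rw [Finset.prod_univ_sum]
  refine Finset.sum_congr rfl fun β _ => ?_
  rw [Finset.prod_div_distrib, Finset.prod_mul_distrib,
    Finset.prod_pow_eq_pow_sum, Finset.prod_pow_eq_pow_sum]
  congr 2
  rw [Finset.sum_add_distrib, Finset.mul_sum]
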